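/- Let M ≥ 2, let P_1,…,P_M be probability mass functions on a finite alphabet 𝒳 (the true distributions), and let T_1,…,T_M be probability mass functions on 𝒳 (the nominal distributions). Suppose there exists Δ > 0 such that for every i ∈ {1,…,M}, V(P_i, T_i) ≤ (min_{j ≠ i} V(T_i, T_j) − Δ)/2. Then for every i ∈ {1,…,M}, if a test sequence x^n of length n is drawn i.i.d. from P_i, the probability that the DGL test with nominal distributions T_1,…,T_M applied to x^n does not accept hypothesis i is at most 2M · exp(−n(Δ²/2 − 2·ln(M−1)/n)). -/

import Mathlib

open MeasureTheory ProbabilityTheory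

/-- Total variation distance between two probability mass functions on a
finite alphabet: `V(P,Q) = (1/2) * ∑ a, |P a - Q a|`. -/
noncomputable def tvDist {𝒳 : Type*} [Fintype 𝒳] (P Q : 𝒳 → ℝ) : ℝ :=
  (1 / 2) * ∑ a, |P a - Q a|

/-- Empirical distribution of a sample `x : Fin N → 𝒳`:
`T a = (1/N) * #{k : x k = a}`. -/
noncomputable def empDist {𝒳 : Type*} [Fintype 𝒳] [DecidableEq 𝒳] {N : ℕ}
    (x : Fin N → 𝒳) : 𝒳 → ℝ :=
  fun a => ((Finset.univ.filter fun k => x k = a).card : ℝ) / N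

/-- The DGL statistic of hypothesis `i`: the maximum over the sets
`A_{p,q} = {a : T q a ≤ T p a}` (for `p < q`) of `|T_i(A) - ν(A)|`,
where `ν` is a (sub)probability vector (e.g. an empirical distribution). -/
noncomputable def dglScore {𝒳 : Type*} [Fintype 𝒳] {M : ℕ}
    (T : Fin M → 𝒳 → ℝ) (ν : 𝒳 → ℝ) (i : Fin M) : ℝ :=
  sSup {x | ∃ p q : Fin M, p < q ∧
    x = |(∑ a ∈ Finset.univ.filter fun a => T q a ≤ T p a, T i a) -
         (∑ a ∈ Finset.univ.filter fun a => T q a ≤ T p a, ν a)|}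

/-- The DGL test: accept the smallest hypothesis index minimizing the DGL statistic. -/
noncomputable def dglClassify {𝒳 : Type*} [Fintype 𝒳] {M : ℕ} (hM : 0 < M)
    (T : Fin M → 𝒳 → ℝ) (ν : 𝒳 → ℝ) : Fin M :=
  (Finset.univ.filter fun i => ∀ j, dglScore T ν i ≤ dglScore T ν j).min' (by
    obtain ⟨i, -, hi⟩ := Finset.exists_min_image Finset.univ (dglScore T ν)
      ⟨⟨0, hM⟩, Finset.mem_univ _⟩
    exact ⟨i, Finset.mem_filter.mpr ⟨Finset.mem_univ _, fun j => hi j (Finset.mem_univ _)⟩⟩)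

/-- Minimum of `tvDist (T i) (T j)` over indices `j ≠ i`, for a fixed `i`. -/
noncomputable def minTVfrom {𝒳 : Type*} [Fintype 𝒳] {M : ℕ}
    (T : Fin M → 𝒳 → ℝ) (i : Fin M) : ℝ :=
  sInf {x | ∃ j : Fin M, j ≠ i ∧ x = tvDist (T i) (T j)}

/-! ### Auxiliary lemmas: Hoeffding's lemma for Bernoulli variables -/

lemma bern_D_pos {p : ℝ} (hp0 : 0 ≤ p) (hp1 : p ≤ 1) (t : ℝ) :
    0 < 1 - p + p * Real.exp t := by
  rcases eq_or_lt_of_le hp0 with h | h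
  · simp [← h]
  · nlinarith [Real.exp_pos t, mul_pos h (Real.exp_pos t)]

lemma bern_G_hasDeriv {p : ℝ} (hp0 : 0 ≤ p) (hp1 : p ≤ 1) (t : ℝ) :
    HasDerivAt (fun t => p + t / 4 - p * Real.exp t / (1 - p + p * Real.exp t))
      (1 / 4 - (p * Real.exp t * (1 - p + p * Real.exp t)
        - p * Real.exp t * (p * Real.exp t)) / (1 - p + p * Real.exp t) ^ 2) t := by
  have hD := bern_D_pos hp0 hp1 t
  have h1 : HasDerivAt (fun t => p * Real.exp t) (p * Real.exp t) t :=
    (Real.hasDerivAt_exp t).const_mul p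
  have h2 : HasDerivAt (fun t => 1 - p + p * Real.exp t) (p * Real.exp t) t := by
    simpa using h1.const_add (1 - p)
  have h3 := h1.div h2 hD.ne'
  have h4 : HasDerivAt (fun t : ℝ => p + t / 4) (1 / 4) t := by
    simpa using ((hasDerivAt_id t).div_const 4).const_add p
  exact h4.sub h3

lemma bern_G_deriv_nonneg {p : ℝ} (hp0 : 0 ≤ p) (hp1 : p ≤ 1) (t : ℝ) :
    0 ≤ 1 / 4 - (p * Real.exp t * (1 - p + p * Real.exp t)
        - p * Real.exp t * (p * Real.exp t)) / (1 - p + p * Real.exp t) ^ 2 := by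
  have hD := bern_D_pos hp0 hp1 t
  set u := p * Real.exp t with hu
  set d := 1 - p + p * Real.exp t with hd
  have hud : u ≤ d := by nlinarith
  have hu0 : 0 ≤ u := mul_nonneg hp0 (Real.exp_pos t).le
  rw [sub_nonneg, div_le_iff₀ (by positivity)]
  nlinarith [sq_nonneg (d - 2 * u)]

lemma bern_G_mono {p : ℝ} (hp0 : 0 ≤ p) (hp1 : p ≤ 1) :
    Monotone (fun t => p + t / 4 - p * Real.exp t / (1 - p + p * Real.exp t)) := by
  apply monotone_of_deriv_nonneg
  · exact fun t => (bern_G_hasDeriv hp0 hp1 t).differentiableAt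
  · intro t
    rw [(bern_G_hasDeriv hp0 hp1 t).deriv]
    exact bern_G_deriv_nonneg hp0 hp1 t

lemma bern_g_hasDeriv {p : ℝ} (hp0 : 0 ≤ p) (hp1 : p ≤ 1) (t : ℝ) :
    HasDerivAt (fun t => t * p + t ^ 2 / 8 - Real.log (1 - p + p * Real.exp t))
      (p + t / 4 - p * Real.exp t / (1 - p + p * Real.exp t)) t := by
  have hD := bern_D_pos hp0 hp1 t
  have h1 : HasDerivAt (fun t => p * Real.exp t) (p * Real.exp t) t :=
    (Real.hasDerivAt_exp t).const_mul p
  have h2 : HasDerivAt (fun t => 1 - p + p * Real.exp t) (p * Real.exp t) t := by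
    simpa using h1.const_add (1 - p)
  have h3 : HasDerivAt (fun t => Real.log (1 - p + p * Real.exp t))
      (p * Real.exp t / (1 - p + p * Real.exp t)) t := by
    simpa [div_eq_mul_inv, mul_comm, Function.comp_def] using (Real.hasDerivAt_log hD.ne').comp t h2
  have h4 : HasDerivAt (fun t : ℝ => t * p + t ^ 2 / 8) (p + t / 4) t := by
    have h5 : HasDerivAt (fun t : ℝ => t * p) p t := by
      simpa using (hasDerivAt_id t).mul_const p
    have h6 : HasDerivAt (fun t : ℝ => t ^ 2 / 8) (t / 4) t := by
      have : HasDerivAt (fun x : ℝ => x ^ 2 / 8) (((2:ℕ):ℝ) * t ^ (2 - 1) / 8) t :=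
        (hasDerivAt_pow 2 t).div_const 8
      convert this using 1
      ring
    exact h5.add h6
  exact h4.sub h3

lemma bern_g_nonneg {p : ℝ} (hp0 : 0 ≤ p) (hp1 : p ≤ 1) (t : ℝ) :
    0 ≤ t * p + t ^ 2 / 8 - Real.log (1 - p + p * Real.exp t) := by
  set g := fun t => t * p + t ^ 2 / 8 - Real.log (1 - p + p * Real.exp t) with hg
  have hG0 : (fun t => p + t / 4 - p * Real.exp t / (1 - p + p * Real.exp t)) 0 = 0 := by
    simp
  have hg0 : g 0 = 0 := by simp [hg]
  have hdiff : Differentiable ℝ g := fun t => (bern_g_hasDeriv hp0 hp1 t).differentiableAt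
  have hderiv : ∀ t, deriv g t
      = p + t / 4 - p * Real.exp t / (1 - p + p * Real.exp t) :=
    fun t => (bern_g_hasDeriv hp0 hp1 t).deriv
  rcases le_total 0 t with ht | ht
  · have : MonotoneOn g (Set.Ici 0) := by
      apply monotoneOn_of_deriv_nonneg (convex_Ici 0) hdiff.continuous.continuousOn
        hdiff.differentiableOn
      intro x hx
      rw [hderiv x]
      have := bern_G_mono hp0 hp1 (le_of_lt (by simpa [interior_Ici] using hx))
      simpa [hG0] using this
    have := this (Set.mem_Ici.2 le_rfl) (Set.mem_Ici.2 ht) ht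
    rw [hg0] at this; exact this
  · have : AntitoneOn g (Set.Iic 0) := by
      apply antitoneOn_of_deriv_nonpos (convex_Iic 0) hdiff.continuous.continuousOn
        hdiff.differentiableOn
      intro x hx
      rw [hderiv x]
      have := bern_G_mono hp0 hp1 (le_of_lt (by simpa [interior_Iic] using hx))
      simpa [hG0] using this
    have := this (Set.mem_Iic.2 ht) (Set.mem_Iic.2 le_rfl) ht
    rw [hg0] at this; exact this

lemma bern_mgf_le {p : ℝ} (hp0 : 0 ≤ p) (hp1 : p ≤ 1) (t : ℝ) :
    p * Real.exp (t * (1 - p)) + (1 - p) * Real.exp (t * (-p)) ≤ Real.exp (t ^ 2 / 8) := by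
  have hD := bern_D_pos hp0 hp1 t
  have h1 : p * Real.exp (t * (1 - p)) + (1 - p) * Real.exp (t * (-p))
      = Real.exp (t * (-p)) * (1 - p + p * Real.exp t) := by
    rw [show t * (1 - p) = t + t * (-p) by ring, Real.exp_add]
    ring
  have h2 : 1 - p + p * Real.exp t ≤ Real.exp (t * p + t ^ 2 / 8) := by
    rw [← Real.log_le_iff_le_exp hD]
    linarith [bern_g_nonneg hp0 hp1 t]
  calc p * Real.exp (t * (1 - p)) + (1 - p) * Real.exp (t * (-p))
      = Real.exp (t * (-p)) * (1 - p + p * Real.exp t) := h1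
    _ ≤ Real.exp (t * (-p)) * Real.exp (t * p + t ^ 2 / 8) :=
        mul_le_mul_of_nonneg_left h2 (Real.exp_pos _).le
    _ = Real.exp (t ^ 2 / 8) := by rw [← Real.exp_add]; ring_nf

/-! ### A one-sided Hoeffding inequality for indicator variables -/

lemma exp_two_valued_integral {Ω : Type*} [MeasurableSpace Ω] (μ : Measure Ω)
    [IsProbabilityMeasure μ] (E : Set Ω) (hE : MeasurableSet E) (p t : ℝ)
    (hp : (μ E).toReal = p) :
    ∫ ω, Real.exp (t * (E.indicator (fun _ => (1:ℝ)) ω - p)) ∂μ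
      = p * Real.exp (t * (1 - p)) + (1 - p) * Real.exp (t * (-p)) := by
  have hfeq : (fun ω => Real.exp (t * (E.indicator (fun _ => (1:ℝ)) ω - p)))
      = fun ω => E.indicator (fun _ => Real.exp (t * (1 - p)) - Real.exp (t * (-p))) ω
          + Real.exp (t * (-p)) := by
    funext ω
    by_cases h : ω ∈ E <;>
      simp [Set.indicator_of_mem, Set.indicator_of_notMem, h, mul_comm]
  rw [hfeq]
  rw [integral_add ((integrable_const _).indicator hE) (integrable_const _)]
  rw [integral_indicator hE]
  simp only [integral_const, measure_univ, ENNReal.toReal_one, one_smul, smul_eq_mul]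
  simp only [Measure.real, Measure.restrict_apply_univ, hp, measure_univ, ENNReal.toReal_one]
  ring

lemma hoeff_upper {Ω : Type*} [MeasurableSpace Ω] (μ : Measure Ω) [IsProbabilityMeasure μ]
    {n : ℕ} (hn : 0 < n) (E : Fin n → Set Ω) (hE : ∀ k, MeasurableSet (E k))
    (p : ℝ) (hp0 : 0 ≤ p) (hp1 : p ≤ 1) (hp : ∀ k, (μ (E k)).toReal = p)
    (hindep : iIndepFun
      (fun k ω => (E k).indicator (fun _ => (1:ℝ)) ω - p) μ)
    (δ : ℝ) (hδ : 0 ≤ δ) :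
    (μ {ω | δ ≤ (∑ k : Fin n, (E k).indicator (fun _ => (1:ℝ)) ω) / n - p}).toReal
      ≤ Real.exp (-2 * n * δ ^ 2) := by
  have hn' : (0:ℝ) < n := Nat.cast_pos.2 hn
  set X : Fin n → Ω → ℝ := fun k ω => (E k).indicator (fun _ => (1:ℝ)) ω - p with hX
  have hXmeas : ∀ k, Measurable (X k) :=
    fun k => (measurable_const.indicator (hE k)).sub measurable_const
  have hXabs : ∀ k ω, |X k ω| ≤ 1 := by
    intro k ω
    by_cases h : ω ∈ E k <;>
      simp only [hX, Set.indicator_of_mem, Set.indicator_of_notMem, h,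
        if_true, if_false] <;> rw [abs_le] <;> constructor <;> simp [h] <;> linarith
  have hSapp : ∀ ω, (∑ k, X k) ω = (∑ k : Fin n, (E k).indicator (fun _ => (1:ℝ)) ω) - n * p := by
    intro ω
    rw [Finset.sum_apply]
    simp [hX, Finset.sum_sub_distrib, mul_comm]
  have hSmeas : Measurable (∑ k, X k) := by
    have : (∑ k, X k) = fun ω => ∑ k, X k ω := by funext ω; rw [Finset.sum_apply]
    rw [this]
    exact Finset.measurable_sum _ fun k _ => hXmeas k
  have hevent : {ω | δ ≤ (∑ k : Fin n, (E k).indicator (fun _ => (1:ℝ)) ω) / n - p}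
      = {ω | (n:ℝ) * δ ≤ (∑ k, X k) ω} := by
    ext ω
    simp only [Set.mem_setOf_eq, hSapp ω]
    constructor
    · intro h
      have := (le_div_iff₀ hn').1
        (by linarith : δ + p ≤ (∑ k : Fin n, (E k).indicator (fun _ => (1:ℝ)) ω) / n)
      linarith
    · intro h
      have : δ + p ≤ (∑ k : Fin n, (E k).indicator (fun _ => (1:ℝ)) ω) / n :=
        (le_div_iff₀ hn').2 (by linarith)
      linarith
  set t : ℝ := 4 * δ with ht
  have ht0 : 0 ≤ t := by positivity
  have h_int : Integrable (fun ω => Real.exp (t * (∑ k, X k) ω)) μ := by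
    refine (integrable_const (Real.exp (|t| * n))).mono'
      ((hSmeas.const_mul t).exp.aestronglyMeasurable) (ae_of_all _ fun ω => ?_)
    rw [Real.norm_eq_abs, abs_of_pos (Real.exp_pos _), Real.exp_le_exp]
    calc t * (∑ k, X k) ω ≤ |t * (∑ k, X k) ω| := le_abs_self _
      _ = |t| * |(∑ k, X k) ω| := abs_mul _ _
      _ ≤ |t| * n := by
          refine mul_le_mul_of_nonneg_left ?_ (abs_nonneg t)
          rw [Finset.sum_apply]
          calc |∑ k, X k ω| ≤ ∑ k, |X k ω| := Finset.abs_sum_le_sum_abs _ _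
            _ ≤ ∑ _k : Fin n, (1:ℝ) := Finset.sum_le_sum fun k _ => hXabs k ω
            _ = n := by simp
  have hmgf_k : ∀ k, mgf (X k) μ t ≤ Real.exp (t ^ 2 / 8) := by
    intro k
    have : mgf (X k) μ t = ∫ ω, Real.exp (t * (X k ω)) ∂μ := rfl
    rw [this, hX]
    rw [exp_two_valued_integral μ (E k) (hE k) p t (hp k)]
    exact bern_mgf_le hp0 hp1 t
  have hmgf_sum : mgf (∑ k, X k) μ t ≤ Real.exp (t ^ 2 / 8) ^ (n:ℕ) := by
    rw [hindep.mgf_sum hXmeas Finset.univ]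
    calc ∏ k, mgf (X k) μ t ≤ ∏ _k : Fin n, Real.exp (t ^ 2 / 8) :=
          Finset.prod_le_prod (fun k _ => mgf_nonneg) (fun k _ => hmgf_k k)
      _ = Real.exp (t ^ 2 / 8) ^ (n:ℕ) := by simp
  have hchern := measure_ge_le_exp_mul_mgf (X := ∑ k, X k) (μ := μ) ((n:ℝ) * δ) ht0 h_int
  rw [hevent]
  refine hchern.trans ?_
  have hfin : Real.exp (-t * ((n:ℝ) * δ)) * Real.exp (t ^ 2 / 8) ^ (n:ℕ)
      = Real.exp (-2 * n * δ ^ 2) := by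
    rw [← Real.exp_nat_mul, ← Real.exp_add]
    congr 1
    rw [ht]; ring
  calc Real.exp (-t * ((n:ℝ) * δ)) * mgf (∑ k, X k) μ t
      ≤ Real.exp (-t * ((n:ℝ) * δ)) * Real.exp (t ^ 2 / 8) ^ (n:ℕ) :=
        mul_le_mul_of_nonneg_left hmgf_sum (Real.exp_pos _).le
    _ = Real.exp (-2 * n * δ ^ 2) := hfin

/-! ### Deterministic lemmas about the DGL statistic -/

section det
set_option linter.unusedSectionVars false
variable {𝒳 : Type*} [Fintype 𝒳] [DecidableEq 𝒳]

lemma tvDist_nonneg (P Q : 𝒳 → ℝ) : 0 ≤ tvDist P Q := by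
  unfold tvDist
  have : (0:ℝ) ≤ ∑ a, |P a - Q a| := Finset.sum_nonneg fun a _ => abs_nonneg _
  linarith

lemma tvDist_comm (P Q : 𝒳 → ℝ) : tvDist P Q = tvDist Q P := by
  unfold tvDist
  congr 1
  exact Finset.sum_congr rfl fun a _ => abs_sub_comm _ _

lemma abs_sub_sum_le_tvDist (P Q : 𝒳 → ℝ) (h : ∑ a, P a = ∑ a, Q a) (s : Finset 𝒳) :
    |(∑ a ∈ s, P a) - ∑ a ∈ s, Q a| ≤ tvDist P Q := by
  have h1 : (∑ a ∈ s, (P a - Q a)) + ∑ a ∈ sᶜ, (P a - Q a) = 0 := by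
    rw [Finset.sum_add_sum_compl]
    rw [Finset.sum_sub_distrib]
    linarith
  have h2 : |∑ a ∈ s, (P a - Q a)| ≤ ∑ a ∈ s, |P a - Q a| := Finset.abs_sum_le_sum_abs _ _
  have h3 : |∑ a ∈ sᶜ, (P a - Q a)| ≤ ∑ a ∈ sᶜ, |P a - Q a| := Finset.abs_sum_le_sum_abs _ _
  have h4 : (∑ a ∈ s, |P a - Q a|) + ∑ a ∈ sᶜ, |P a - Q a| = ∑ a, |P a - Q a| :=
    Finset.sum_add_sum_compl _ _
  have h5 : |∑ a ∈ sᶜ, (P a - Q a)| = |∑ a ∈ s, (P a - Q a)| := by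
    rw [show (∑ a ∈ sᶜ, (P a - Q a)) = -(∑ a ∈ s, (P a - Q a)) by linarith, abs_neg]
  rw [← Finset.sum_sub_distrib]
  unfold tvDist
  linarith [abs_nonneg (∑ a ∈ s, (P a - Q a))]

lemma scheffe (P Q : 𝒳 → ℝ) (hP : ∑ a, P a = 1) (hQ : ∑ a, Q a = 1) :
    tvDist P Q = (∑ a ∈ Finset.univ.filter fun a => Q a ≤ P a, P a)
      - ∑ a ∈ Finset.univ.filter fun a => Q a ≤ P a, Q a := by
  classical
  set s : Finset 𝒳 := Finset.univ.filter fun a => Q a ≤ P a with hs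
  have h1 : (∑ a ∈ s, (P a - Q a)) + ∑ a ∈ sᶜ, (P a - Q a) = 0 := by
    rw [Finset.sum_add_sum_compl, Finset.sum_sub_distrib]
    linarith
  have h2 : ∑ a ∈ s, |P a - Q a| = ∑ a ∈ s, (P a - Q a) := by
    refine Finset.sum_congr rfl fun a ha => ?_
    rw [hs, Finset.mem_filter] at ha
    exact abs_of_nonneg (by linarith [ha.2])
  have h3 : ∑ a ∈ sᶜ, |P a - Q a| = ∑ a ∈ sᶜ, -(P a - Q a) := by
    refine Finset.sum_congr rfl fun a ha => ?_
    rw [hs, Finset.mem_compl, Finset.mem_filter] at ha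
    have : ¬ Q a ≤ P a := fun h => ha ⟨Finset.mem_univ a, h⟩
    exact abs_of_nonpos (by push_neg at this; linarith)
  have h4 : (∑ a ∈ s, |P a - Q a|) + ∑ a ∈ sᶜ, |P a - Q a| = ∑ a, |P a - Q a| :=
    Finset.sum_add_sum_compl _ _
  have h5 : ∑ a ∈ sᶜ, -(P a - Q a) = -(∑ a ∈ sᶜ, (P a - Q a)) := by
    rw [Finset.sum_neg_distrib]
  unfold tvDist
  rw [← Finset.sum_sub_distrib]
  linarith

variable {M : ℕ} (T : Fin M → 𝒳 → ℝ)

noncomputable def dglVal (ν : 𝒳 → ℝ) (i : Fin M) (p q : Fin M) : ℝ :=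
  |(∑ a ∈ Finset.univ.filter fun a => T q a ≤ T p a, T i a) -
    (∑ a ∈ Finset.univ.filter fun a => T q a ≤ T p a, ν a)|

lemma dglSet_eq (ν : 𝒳 → ℝ) (i : Fin M) :
    {x | ∃ p q : Fin M, p < q ∧
      x = |(∑ a ∈ Finset.univ.filter fun a => T q a ≤ T p a, T i a) -
           (∑ a ∈ Finset.univ.filter fun a => T q a ≤ T p a, ν a)|}
    = (fun r : Fin M × Fin M => dglVal T ν i r.1 r.2) '' {r | r.1 < r.2} := by
  ext x
  constructor
  · rintro ⟨p, q, hpq, rfl⟩; exact ⟨(p, q), hpq, rfl⟩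
  · rintro ⟨⟨p, q⟩, hpq, rfl⟩; exact ⟨p, q, hpq, rfl⟩

lemma dglSet_finite (ν : 𝒳 → ℝ) (i : Fin M) :
    Set.Finite {x | ∃ p q : Fin M, p < q ∧
      x = |(∑ a ∈ Finset.univ.filter fun a => T q a ≤ T p a, T i a) -
           (∑ a ∈ Finset.univ.filter fun a => T q a ≤ T p a, ν a)|} := by
  rw [dglSet_eq]
  exact (Set.toFinite _).image _

lemma dglSet_nonempty (hM : 2 ≤ M) (ν : 𝒳 → ℝ) (i : Fin M) :
    Set.Nonempty {x | ∃ p q : Fin M, p < q ∧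
      x = |(∑ a ∈ Finset.univ.filter fun a => T q a ≤ T p a, T i a) -
           (∑ a ∈ Finset.univ.filter fun a => T q a ≤ T p a, ν a)|} := by
  refine ⟨_, ⟨⟨0, by omega⟩, ⟨1, by omega⟩, ?_, rfl⟩⟩
  exact Fin.mk_lt_mk.2 (by omega)

lemma dglVal_le_score (ν : 𝒳 → ℝ) (i : Fin M) {p q : Fin M} (hpq : p < q) :
    dglVal T ν i p q ≤ dglScore T ν i :=
  le_csSup (dglSet_finite T ν i).bddAbove ⟨p, q, hpq, rfl⟩

lemma score_attained (hM : 2 ≤ M) (ν : 𝒳 → ℝ) (i : Fin M) :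
    ∃ p q : Fin M, p < q ∧ dglScore T ν i = dglVal T ν i p q := by
  have := (dglSet_nonempty T hM ν i).csSup_mem (dglSet_finite T ν i)
  obtain ⟨p, q, hpq, h⟩ := this
  exact ⟨p, q, hpq, h⟩

lemma minTVfrom_le (i j : Fin M) (hj : j ≠ i) : minTVfrom T i ≤ tvDist (T i) (T j) := by
  apply csInf_le
  · exact ⟨0, by rintro x ⟨j', -, rfl⟩; exact tvDist_nonneg _ _⟩
  · exact ⟨j, hj, rfl⟩

/-- Key deterministic lemma: if the DGL test does not accept `i`, then some
pairwise set witnesses a large empirical deviation. -/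
lemma dgl_key {M : ℕ} (hM : 2 ≤ M) (T : Fin M → 𝒳 → ℝ) (Q : 𝒳 → ℝ)
    (hT1 : ∀ i, ∑ a, T i a = 1) (hQ1 : ∑ a, Q a = 1)
    (Δ : ℝ) (i : Fin M)
    (hrob : tvDist Q (T i) ≤ (minTVfrom T i - Δ) / 2)
    (ν : 𝒳 → ℝ) (h : dglClassify (by omega : 0 < M) T ν ≠ i) :
    ∃ p q : Fin M, p < q ∧
      Δ / 2 ≤ |(∑ a ∈ Finset.univ.filter fun a => T q a ≤ T p a, Q a) -
               (∑ a ∈ Finset.univ.filter fun a => T q a ≤ T p a, ν a)| := by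
  classical
  set c := dglClassify (by omega : 0 < M) T ν with hc
  have hne : (Finset.univ.filter fun i => ∀ j, dglScore T ν i ≤ dglScore T ν j).Nonempty := by
    obtain ⟨i', -, hi⟩ := Finset.exists_min_image Finset.univ (dglScore T ν)
      ⟨⟨0, by omega⟩, Finset.mem_univ _⟩
    exact ⟨i', Finset.mem_filter.mpr ⟨Finset.mem_univ _, fun j => hi j (Finset.mem_univ _)⟩⟩
  have hcmem : c ∈ (Finset.univ.filter fun i => ∀ j, dglScore T ν i ≤ dglScore T ν j) :=
    Finset.min'_mem _ hne
  have hcmin : ∀ j, dglScore T ν c ≤ dglScore T ν j := (Finset.mem_filter.1 hcmem).2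
  have hsc : dglScore T ν c ≤ dglScore T ν i := hcmin i
  have htv2 : tvDist (T i) (T c) ≤ 2 * dglScore T ν i := by
    rcases lt_or_gt_of_ne h with hic | hic
    · have hX := abs_le.1 (dglVal_le_score T ν c hic)
      have hY := abs_le.1 (dglVal_le_score T ν i hic)
      unfold dglVal at hX hY
      have hsch := scheffe (T c) (T i) (hT1 c) (hT1 i)
      rw [tvDist_comm]
      linarith [hX.1, hX.2, hY.1, hY.2]
    · have hX := abs_le.1 (dglVal_le_score T ν i hic)
      have hY := abs_le.1 (dglVal_le_score T ν c hic)
      unfold dglVal at hX hY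
      have hsch := scheffe (T i) (T c) (hT1 i) (hT1 c)
      linarith [hX.1, hX.2, hY.1, hY.2]
  have hmin : minTVfrom T i ≤ 2 * dglScore T ν i :=
    (minTVfrom_le T i c h).trans htv2
  obtain ⟨p, q, hpq, hat⟩ := score_attained T hM ν i
  refine ⟨p, q, hpq, ?_⟩
  have htri := abs_sub_le (∑ a ∈ Finset.univ.filter fun a => T q a ≤ T p a, T i a)
    (∑ a ∈ Finset.univ.filter fun a => T q a ≤ T p a, Q a)
    (∑ a ∈ Finset.univ.filter fun a => T q a ≤ T p a, ν a)
  have hTQ : |(∑ a ∈ Finset.univ.filter fun a => T q a ≤ T p a, T i a) -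
      ∑ a ∈ Finset.univ.filter fun a => T q a ≤ T p a, Q a| ≤ tvDist Q (T i) := by
    rw [← tvDist_comm]
    exact abs_sub_sum_le_tvDist (T i) Q (by rw [hT1 i, hQ1]) _
  unfold dglVal at hat
  linarith
end det

/-! ### Empirical-distribution and preimage-measure helpers -/

lemma emp_sum {𝒳 : Type*} [Fintype 𝒳] [DecidableEq 𝒳] {N : ℕ} (x : Fin N → 𝒳)
    (B : Finset 𝒳) :
    ∑ a ∈ B, empDist x a = (∑ k : Fin N, if x k ∈ B then (1:ℝ) else 0) / N := by
  unfold empDist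
  rw [← Finset.sum_div]
  congr 1
  have : ∀ a, ((Finset.univ.filter fun k => x k = a).card : ℝ)
      = ∑ k : Fin N, if x k = a then (1:ℝ) else 0 := by
    intro a
    rw [Finset.card_filter]
    push_cast
    rfl
  rw [Finset.sum_congr rfl fun a _ => this a, Finset.sum_comm]
  refine Finset.sum_congr rfl fun k _ => ?_
  simp [Finset.sum_ite_eq]

lemma measure_preimage_finset {Ω : Type*} [MeasurableSpace Ω] (μ : Measure Ω)
    {𝒳 : Type*} [Fintype 𝒳] [MeasurableSpace 𝒳] [MeasurableSingletonClass 𝒳]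
    (f : Ω → 𝒳) (hf : Measurable f) (B : Finset 𝒳) (w : 𝒳 → ℝ) (hw : ∀ a, 0 ≤ w a)
    (h : ∀ a, μ (f ⁻¹' {a}) = ENNReal.ofReal (w a)) :
    μ (f ⁻¹' (B : Set 𝒳)) = ENNReal.ofReal (∑ a ∈ B, w a) := by
  classical
  have hB : (B : Set 𝒳) = ⋃ a ∈ B, {a} := by ext y; simp
  rw [hB, Set.preimage_iUnion₂]
  rw [measure_biUnion_finset ?_ fun a _ => hf (measurableSet_singleton a)]
  · rw [ENNReal.ofReal_sum_of_nonneg fun a _ => hw a]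
    exact Finset.sum_congr rfl fun a _ => h a
  · intro a _ b _ hab
    exact Disjoint.preimage f (Set.disjoint_singleton.2 hab)

/-! ### Main theorem -/

theorem stmt_11 {𝒳 : Type*} [Fintype 𝒳] [DecidableEq 𝒳] [MeasurableSpace 𝒳]
    [MeasurableSingletonClass 𝒳]
    {Ω : Type*} [MeasurableSpace Ω] (μ : Measure Ω) [IsProbabilityMeasure μ]
    {M : ℕ} (hM : 2 ≤ M)
    (P T : Fin M → 𝒳 → ℝ)
    (hP0 : ∀ i a, 0 ≤ P i a) (hP1 : ∀ i, ∑ a, P i a = 1)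
    (hT0 : ∀ i a, 0 ≤ T i a) (hT1 : ∀ i, ∑ a, T i a = 1)
    (Δ : ℝ) (hΔ : 0 < Δ)
    (hrob : ∀ i, tvDist (P i) (T i) ≤ (minTVfrom T i - Δ) / 2)
    (i : Fin M) {n : ℕ} (hn : 0 < n)
    (Z : Fin n → Ω → 𝒳)
    (hmeas : ∀ k, Measurable (Z k))
    (hindep : iIndepFun Z μ)
    (hdist : ∀ k a, μ (Z k ⁻¹' {a}) = ENNReal.ofReal (P i a)) :
    (μ {ω | dglClassify (by omega : 0 < M) T (empDist fun k => Z k ω) ≠ i}).toReal ≤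
      2 * M * Real.exp (-(n : ℝ) * (Δ ^ 2 / 2 - 2 * Real.log ((M : ℝ) - 1) / n)) := by
  classical
  have hn' : (0:ℝ) < n := Nat.cast_pos.2 hn
  have hM' : (2:ℝ) ≤ (M:ℝ) := by exact_mod_cast hM
  -- tail bound for any subset B of the alphabet
  have key_tail : ∀ B : Finset 𝒳,
      (μ {ω | Δ / 2 ≤ (∑ k : Fin n, (Z k ⁻¹' (B : Set 𝒳)).indicator (fun _ => (1:ℝ)) ω) / (n:ℝ)
        - ∑ a ∈ B, P i a}).toReal ≤ Real.exp (-2 * n * (Δ/2) ^ 2) := by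
    intro B
    have hpB0 : 0 ≤ ∑ a ∈ B, P i a := Finset.sum_nonneg fun a _ => hP0 i a
    have hpB1 : (∑ a ∈ B, P i a) ≤ 1 := by
      rw [← hP1 i]
      exact Finset.sum_le_sum_of_subset_of_nonneg (Finset.subset_univ B)
        (fun a _ _ => hP0 i a)
    have hEk : ∀ k : Fin n, (μ (Z k ⁻¹' (B : Set 𝒳))).toReal = ∑ a ∈ B, P i a := fun k => by
      rw [measure_preimage_finset μ (Z k) (hmeas k) B (P i) (hP0 i) (hdist k),
        ENNReal.toReal_ofReal hpB0]
    have hfun : (fun (k : Fin n) (ω : Ω) =>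
        (Z k ⁻¹' (B : Set 𝒳)).indicator (fun _ => (1:ℝ)) ω - ∑ a ∈ B, P i a)
        = fun k => (fun a : 𝒳 => (if a ∈ B then (1:ℝ) else 0) - ∑ a ∈ B, P i a) ∘ Z k := by
      funext k ω
      simp [Set.indicator_apply]
    have hind : iIndepFun
        (fun (k : Fin n) (ω : Ω) =>
          (Z k ⁻¹' (B : Set 𝒳)).indicator (fun _ => (1:ℝ)) ω - ∑ a ∈ B, P i a) μ := by
      rw [hfun]
      exact hindep.comp _ fun _ => measurable_of_countable _
    exact hoeff_upper μ hn _ (fun k => hmeas k B.measurableSet) _ hpB0 hpB1 hEk hind (Δ/2)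
      (by positivity)
  -- the collection of pairwise sets and tail events
  set Pairs : Finset (Fin M × Fin M) := Finset.univ.filter (fun r => r.1 < r.2) with hPairs
  set A : Fin M × Fin M → Finset 𝒳 :=
    fun r => Finset.univ.filter fun a => T r.2 a ≤ T r.1 a with hA
  set U : Fin M × Fin M → Set Ω := fun r =>
    {ω | Δ / 2 ≤ (∑ k : Fin n, (Z k ⁻¹' ((A r : Finset 𝒳) : Set 𝒳)).indicator
      (fun _ => (1:ℝ)) ω) / (n:ℝ) - ∑ a ∈ A r, P i a} with hU
  set L : Fin M × Fin M → Set Ω := fun r =>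
    {ω | Δ / 2 ≤ (∑ k : Fin n, (Z k ⁻¹' (((A r)ᶜ : Finset 𝒳) : Set 𝒳)).indicator
      (fun _ => (1:ℝ)) ω) / (n:ℝ) - ∑ a ∈ (A r)ᶜ, P i a} with hL
  have hemp : ∀ (B : Finset 𝒳) ω,
      (∑ k : Fin n, (Z k ⁻¹' (B : Set 𝒳)).indicator (fun _ => (1:ℝ)) ω) / (n:ℝ)
        = ∑ a ∈ B, empDist (fun k => Z k ω) a := by
    intro B ω
    rw [emp_sum]
    congr 1
    exact Finset.sum_congr rfl fun k _ => by simp [Set.indicator_apply]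
  -- event inclusion
  have hsub : {ω | dglClassify (by omega : 0 < M) T (empDist fun k => Z k ω) ≠ i}
      ⊆ ⋃ r ∈ Pairs, U r ∪ L r := by
    intro ω hω
    obtain ⟨p', q', hpq, hdev⟩ := dgl_key hM T (P i) hT1 (hP1 i) Δ i (hrob i)
      (empDist fun k => Z k ω) hω
    have hrP : (p', q') ∈ Pairs := by simp [hPairs, hpq]
    have hν1 : (∑ a ∈ A (p', q'), empDist (fun k => Z k ω) a)
        + ∑ a ∈ (A (p', q'))ᶜ, empDist (fun k => Z k ω) a = 1 := by
      rw [Finset.sum_add_sum_compl, emp_sum]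
      simp [hn'.ne']
    have hp1 : (∑ a ∈ A (p', q'), P i a) + ∑ a ∈ (A (p', q'))ᶜ, P i a = 1 := by
      rw [Finset.sum_add_sum_compl]; exact hP1 i
    have hAr : A (p', q') = Finset.univ.filter fun a => T q' a ≤ T p' a := rfl
    rw [← hAr] at hdev
    rcases le_abs.1 hdev with hcase | hcase
    · -- P-mass exceeds empirical mass: lower tail, i.e. complement upper tail
      refine Set.mem_biUnion hrP (Or.inr ?_)
      show Δ / 2 ≤ _
      rw [hemp]
      linarith
    · refine Set.mem_biUnion hrP (Or.inl ?_)
      show Δ / 2 ≤ _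
      rw [hemp]
      linarith
  -- union bound
  have hμ1 : μ {ω | dglClassify (by omega : 0 < M) T (empDist fun k => Z k ω) ≠ i}
      ≤ ∑ r ∈ Pairs, (μ (U r) + μ (L r)) :=
    (measure_mono hsub).trans <| (measure_biUnion_finset_le _ _).trans <|
      Finset.sum_le_sum fun r _ => measure_union_le _ _
  have hfin : (∑ r ∈ Pairs, (μ (U r) + μ (L r))) ≠ ⊤ := by
    refine (ENNReal.sum_lt_top.2 fun r _ => ?_).ne
    exact ENNReal.add_lt_top.2 ⟨measure_lt_top μ _, measure_lt_top μ _⟩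
  have h2 : (μ {ω | dglClassify (by omega : 0 < M) T (empDist fun k => Z k ω) ≠ i}).toReal
      ≤ ∑ r ∈ Pairs, ((μ (U r)).toReal + (μ (L r)).toReal) := by
    refine (ENNReal.toReal_mono hfin hμ1).trans_eq ?_
    rw [ENNReal.toReal_sum fun r _ =>
      (ENNReal.add_lt_top.2 ⟨measure_lt_top μ _, measure_lt_top μ _⟩).ne]
    exact Finset.sum_congr rfl fun r _ =>
      ENNReal.toReal_add (measure_ne_top μ _) (measure_ne_top μ _)
  have h3 : ∑ r ∈ Pairs, ((μ (U r)).toReal + (μ (L r)).toReal)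
      ≤ (Pairs.card : ℝ) * (2 * Real.exp (-2 * n * (Δ/2) ^ 2)) := by
    calc ∑ r ∈ Pairs, ((μ (U r)).toReal + (μ (L r)).toReal)
        ≤ ∑ _r ∈ Pairs, (2 * Real.exp (-2 * n * (Δ/2) ^ 2)) := by
          refine Finset.sum_le_sum fun r _ => ?_
          have h4 := key_tail (A r)
          have h5 := key_tail ((A r)ᶜ)
          have hUr : (μ (U r)).toReal ≤ Real.exp (-2 * n * (Δ/2) ^ 2) := h4
          have hLr : (μ (L r)).toReal ≤ Real.exp (-2 * n * (Δ/2) ^ 2) := h5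
          linarith
      _ = (Pairs.card : ℝ) * (2 * Real.exp (-2 * n * (Δ/2) ^ 2)) := by
          rw [Finset.sum_const, nsmul_eq_mul]
  have hcard : (Pairs.card : ℝ) ≤ (M:ℝ) * M - M := by
    have hsubOff : Pairs ⊆ (Finset.univ : Finset (Fin M)).offDiag := by
      intro r hr
      rw [Finset.mem_offDiag]
      rw [hPairs, Finset.mem_filter] at hr
      exact ⟨Finset.mem_univ _, Finset.mem_univ _, ne_of_lt hr.2⟩
    have hc := Finset.card_le_card hsubOff
    rw [Finset.offDiag_card, Finset.card_univ, Fintype.card_fin] at hc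
    have hMM : M ≤ M * M := Nat.le_mul_of_pos_left M (by omega)
    calc (Pairs.card : ℝ) ≤ ((M * M - M : ℕ) : ℝ) := Nat.cast_le.2 hc
      _ = (M:ℝ) * M - M := by push_cast [Nat.cast_sub hMM]; ring
  -- final arithmetic
  have hexp : Real.exp (-(n : ℝ) * (Δ ^ 2 / 2 - 2 * Real.log ((M : ℝ) - 1) / n))
      = ((M:ℝ) - 1) ^ 2 * Real.exp (-2 * n * (Δ/2) ^ 2) := by
    have harg : -(n : ℝ) * (Δ ^ 2 / 2 - 2 * Real.log ((M : ℝ) - 1) / n)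
        = (-2 * n * (Δ/2) ^ 2) + (Real.log ((M:ℝ) - 1) + Real.log ((M:ℝ) - 1)) := by
      field_simp
      ring
    rw [harg, Real.exp_add, Real.exp_add, Real.exp_log (by linarith : (0:ℝ) < (M:ℝ) - 1)]
    ring
  have hE := Real.exp_pos (-2 * (n:ℝ) * (Δ/2) ^ 2)
  calc (μ {ω | dglClassify (by omega : 0 < M) T (empDist fun k => Z k ω) ≠ i}).toReal
      ≤ ∑ r ∈ Pairs, ((μ (U r)).toReal + (μ (L r)).toReal) := h2
    _ ≤ (Pairs.card : ℝ) * (2 * Real.exp (-2 * n * (Δ/2) ^ 2)) := h3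
    _ ≤ ((M:ℝ) * M - M) * (2 * Real.exp (-2 * n * (Δ/2) ^ 2)) := by
        exact mul_le_mul_of_nonneg_right hcard (by positivity)
    _ ≤ 2 * M * Real.exp (-(n : ℝ) * (Δ ^ 2 / 2 - 2 * Real.log ((M : ℝ) - 1) / n)) := by
        rw [hexp]
        have hkey : 0 ≤ ((M:ℝ) * ((M:ℝ) - 1) * ((M:ℝ) - 2)) * (2 * Real.exp (-2 * n * (Δ/2) ^ 2)) :=
          mul_nonneg (by nlinarith) (by positivity)
        nlinarith [hkey]
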